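/- For every integer i ≥ 1, the Laurent polynomial {2i+1}_{q,i+1}/{1}_q is not an element of the ideal ({2i+1}_{q,i+1}/{1}_q) · I_i · I_i of Z[q,q^{-1}], where I_i is the ideal generated by {i-k}_q!{k}_q! for 0 ≤ k ≤ i. -/

import Mathlib

/-!
Statement 19: For i ≥ 1, the Laurent polynomial {2i+1}_{q,i+1}/{1}_q is not an element of
the ideal ({2i+1}_{q,i+1}/{1}_q)·I_i·I_i of ℤ[q,q⁻¹], where I_i is generated by
{i-k}_q!{k}_q!, 0 ≤ k ≤ i.
-/

open LaurentPolynomial Finset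

noncomputable section

/-- `{i}_q = q^i - 1` in `ℤ[q,q⁻¹]`. -/
def qInt (i : ℤ) : LaurentPolynomial ℤ := T i - 1

/-- `{i}_{q,n} = {i}_q {i-1}_q ⋯ {i-n+1}_q`. -/
def qPoch (i : ℤ) (n : ℕ) : LaurentPolynomial ℤ := ∏ k ∈ range n, qInt (i - k)

/-- `{n}_q! = {n}_{q,n}`. -/
def qFact (n : ℕ) : LaurentPolynomial ℤ := qPoch n n

/-- The ideal `I_l` of `ℤ[q,q⁻¹]` generated by `{l-k}_q!·{k}_q!`, `k = 0,…,l`. -/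
def Iideal (l : ℕ) : Ideal (LaurentPolynomial ℤ) :=
  Ideal.span {x | ∃ k ≤ l, x = qFact (l - k) * qFact k}

/-- Evaluation at `q = 1`, as an algebra hom `ℤ[T;T⁻¹] →ₐ[ℤ] ℤ`. -/
def phiOne : LaurentPolynomial ℤ →ₐ[ℤ] ℤ := AddMonoidAlgebra.lift ℤ ℤ ℤ 1

lemma phiOne_T (n : ℤ) : phiOne (T n) = 1 := by
  rw [phiOne, T, AddMonoidAlgebra.lift_single]; simp

lemma phiOne_qInt (m : ℤ) : phiOne (qInt m) = 0 := by
  simp [qInt, phiOne_T]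

lemma phiOne_qFact {k : ℕ} (hk : 1 ≤ k) : phiOne (qFact k) = 0 := by
  rw [qFact, qPoch, map_prod]
  exact Finset.prod_eq_zero (Finset.mem_range.2 hk) (phiOne_qInt _)

lemma Iideal_le_ker (l : ℕ) (hl : 1 ≤ l) :
    Iideal l ≤ RingHom.ker (phiOne : LaurentPolynomial ℤ →ₐ[ℤ] ℤ).toRingHom := by
  rw [Iideal, Ideal.span_le]
  rintro x ⟨k, hk, rfl⟩
  simp only [SetLike.mem_coe, RingHom.mem_ker, AlgHom.toRingHom_eq_coe, RingHom.coe_coe, map_mul]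
  rcases Nat.eq_zero_or_pos k with rfl | hk1
  · rw [Nat.sub_zero, phiOne_qFact hl, zero_mul]
  · rw [phiOne_qFact hk1, mul_zero]

lemma qInt_ne_zero {m : ℤ} (hm : m ≠ 0) : qInt m ≠ 0 := by
  rw [qInt, sub_ne_zero, ← T_zero]
  intro h
  exact hm (AddMonoidAlgebra.single_left_injective (one_ne_zero (α := ℤ)) h)

theorem stmt19 (i : ℕ) (hi : 1 ≤ i) (g : LaurentPolynomial ℤ)
    (hg : g * qInt 1 = qPoch (2 * i + 1) (i + 1)) :
    g ∉ Ideal.span {g} * Iideal i * Iideal i := by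
  intro h
  have hg0 : g ≠ 0 := by
    intro h0
    rw [h0, zero_mul] at hg
    have : qPoch (2 * i + 1) (i + 1) ≠ 0 := by
      rw [qPoch]
      refine Finset.prod_ne_zero_iff.2 fun k hk => qInt_ne_zero ?_
      have hk' : (k : ℤ) < i + 1 := by exact_mod_cast Finset.mem_range.1 hk
      omega
    exact this hg.symm
  rw [mul_assoc, Ideal.mem_span_singleton_mul] at h
  obtain ⟨z, hz, hgz⟩ := h
  have hz1 : z = 1 := by
    apply mul_left_cancel₀ hg0
    rw [hgz, mul_one]
  rw [hz1] at hz
  have h1 : (1 : LaurentPolynomial ℤ) ∈ Iideal i := Ideal.mul_le_right hz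
  have := Iideal_le_ker i hi h1
  simp only [AlgHom.toRingHom_eq_coe, RingHom.mem_ker, RingHom.coe_coe, map_one] at this
  exact one_ne_zero this
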